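/- Let a(λ) = c Σ_{ijk} area(P_i P_j P_k) λ_i λ_j λ_k (c > 0, P_i vertices of a convex polygon in cyclic order) restricted to the simplex, let λ^M be a point where all partial derivatives of a are equal (local maximum), and fix an index i. Define λ^D by λ^D_i = 0, λ^D_{i+1} = λ^M_i + λ^M_{i+1}, λ^D_j = λ^M_j otherwise. Then a(λ^D) − a(λ^M) = −c·3!·(λ^M_i)² Σ_j λ^M_j area(P_i P_{i+1} P_j). -/
import Mathlib


open Finset

/-- 2D cross product. -/
def cross2 (u v : ℝ × ℝ) : ℝ := u.1 * v.2 - u.2 * v.1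

/-- Unsigned area of a triangle in the plane. -/
noncomputable def triArea (A B C : ℝ × ℝ) : ℝ := |cross2 (B - A) (C - A)| / 2

/-- The cubic form `a(λ) = c Σ_{i,j,k} area(P_i P_j P_k) λ_i λ_j λ_k`. -/
noncomputable def aForm {n : ℕ} (c : ℝ) (P : Fin n → ℝ × ℝ) (lam : Fin n → ℝ) : ℝ :=
  c * ∑ i, ∑ j, ∑ k, triArea (P i) (P j) (P k) * (lam i * lam j * lam k)

lemma triArea_swap12 (A B C : ℝ × ℝ) : triArea A B C = triArea B A C := by
  have h : cross2 (B - A) (C - A) = -(cross2 (A - B) (C - B)) := by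
    simp [cross2]; ring
  simp [triArea, h, abs_neg]

lemma triArea_swap23 (A B C : ℝ × ℝ) : triArea A B C = triArea A C B := by
  have h : cross2 (B - A) (C - A) = -(cross2 (C - A) (B - A)) := by
    simp [cross2]; ring
  simp [triArea, h, abs_neg]

lemma triArea_self12 (A C : ℝ × ℝ) : triArea A A C = 0 := by simp [triArea, cross2]
lemma triArea_self13 (A B : ℝ × ℝ) : triArea A B A = 0 := by simp [triArea, cross2]
lemma triArea_self23 (A B : ℝ × ℝ) : triArea A B B = 0 := by
  have h : cross2 (B - A) (B - A) = 0 := by simp [cross2]; ring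
  simp [triArea, h]

noncomputable def wfun {n : ℕ} [NeZero n] (i : Fin n) : Fin n → ℝ :=
  fun j => (if j = i + 1 then 1 else 0) - (if j = i then 1 else 0)

lemma sum_wfun_mul {n : ℕ} [NeZero n] (i : Fin n) (f : Fin n → ℝ) :
    ∑ a, wfun i a * f a = f (i + 1) - f i := by
  simp [wfun, sub_mul, Finset.sum_sub_distrib, ite_mul]

/-- Let `a(λ) = c Σ area(P_i P_j P_k) λ_i λ_j λ_k` (`c > 0`, `P` the
vertices of a convex polygon in cyclic order) on the simplex, `λ^M` a point where all
partial derivatives `∂a/∂λ_i = 3c Σ_{j,k} area(P_i P_j P_k) λ_j λ_k` are equal (local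
maximum), and fix `i`.  Setting `λ^D_i = 0`, `λ^D_{i+1} = λ^M_i + λ^M_{i+1}` and
`λ^D_j = λ^M_j` otherwise, one has
`a(λ^D) − a(λ^M) = −c·3!·(λ^M_i)² Σ_j λ^M_j area(P_i P_{i+1} P_j)`. -/
theorem stmt13 {n : ℕ} [NeZero n] (hn : 3 ≤ n) (c : ℝ) (hc : 0 < c)
    (P : Fin n → ℝ × ℝ)
    (hconv : ∀ i j : Fin n, 0 ≤ cross2 (P (i + 1) - P i) (P j - P i))
    (lamM : Fin n → ℝ) (hnn : ∀ i, 0 ≤ lamM i) (hsum : ∑ i, lamM i = 1)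
    (hcrit : ∀ i j : Fin n,
      3 * c * ∑ j', ∑ k', triArea (P i) (P j') (P k') * (lamM j' * lamM k') =
      3 * c * ∑ j', ∑ k', triArea (P j) (P j') (P k') * (lamM j' * lamM k'))
    (i : Fin n) (lamD : Fin n → ℝ)
    (hD : lamD = Function.update (Function.update lamM i 0) (i + 1)
      (lamM i + lamM (i + 1))) :
    aForm c P lamD - aForm c P lamM =
      -c * 6 * (lamM i) ^ 2 * ∑ j, lamM j * triArea (P i) (P (i + 1)) (P j) := by

  classical
  have hne : i + 1 ≠ i := by
    intro h
    have h1 : (1 : Fin n) = 0 := add_eq_left.mp h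
    have h2 := congrArg Fin.val h1
    simp [Fin.val_one', Fin.val_zero] at h2
    omega
  -- lamD as a perturbation of lamM
  have hx : ∀ j, lamD j = lamM j + lamM i * wfun i j := by
    intro j
    simp only [hD, Function.update_apply, wfun]
    split_ifs with h1 h2 h2
    · exact absurd (h2 ▸ h1) hne.symm
    · subst h1; ring
    · subst h2; ring
    · ring
  -- critical point identity
  have hcc : (∑ b, ∑ k, triArea (P (i+1)) (P b) (P k) * (lamM b * lamM k))
      = ∑ b, ∑ k, triArea (P i) (P b) (P k) * (lamM b * lamM k) := by
    have h3 : (3 : ℝ) * c ≠ 0 := by positivity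
    exact mul_left_cancel₀ h3 (hcrit (i+1) i)
  -- first-order sums
  have hS1a : (∑ a, ∑ b, ∑ k, triArea (P a) (P b) (P k) * (wfun i a * lamM b * lamM k)) = 0 := by
    have step : ∀ a : Fin n, (∑ b, ∑ k, triArea (P a) (P b) (P k) * (wfun i a * lamM b * lamM k))
        = wfun i a * ∑ b, ∑ k, triArea (P a) (P b) (P k) * (lamM b * lamM k) := by
      intro a
      rw [Finset.mul_sum]
      refine Finset.sum_congr rfl fun b _ => ?_
      rw [Finset.mul_sum]
      exact Finset.sum_congr rfl fun k _ => by ring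
    rw [Finset.sum_congr rfl fun a _ => step a,
      sum_wfun_mul i (fun a => ∑ b, ∑ k, triArea (P a) (P b) (P k) * (lamM b * lamM k)),
      hcc, sub_self]
  have hS1b : (∑ a, ∑ b, ∑ k, triArea (P a) (P b) (P k) * (lamM a * wfun i b * lamM k))
      = ∑ a, ∑ b, ∑ k, triArea (P a) (P b) (P k) * (wfun i a * lamM b * lamM k) := by
    rw [Finset.sum_comm]
    refine Finset.sum_congr rfl fun a _ => Finset.sum_congr rfl fun b _ =>
      Finset.sum_congr rfl fun k _ => ?_
    rw [triArea_swap12]; ring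
  have hS1c : (∑ a, ∑ b, ∑ k, triArea (P a) (P b) (P k) * (lamM a * lamM b * wfun i k))
      = ∑ a, ∑ b, ∑ k, triArea (P a) (P b) (P k) * (lamM a * wfun i b * lamM k) := by
    refine Finset.sum_congr rfl fun a _ => ?_
    rw [Finset.sum_comm]
    refine Finset.sum_congr rfl fun b _ => Finset.sum_congr rfl fun k _ => ?_
    rw [triArea_swap23]; ring
  -- second-order sums
  have hS2a : (∑ a, ∑ b, ∑ k, triArea (P a) (P b) (P k) * (wfun i a * wfun i b * lamM k))
      = -2 * ∑ k, triArea (P i) (P (i+1)) (P k) * lamM k := by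
    have inner : ∀ a : Fin n, (∑ b, ∑ k, triArea (P a) (P b) (P k) * (wfun i a * wfun i b * lamM k))
        = wfun i a * ((∑ k, triArea (P a) (P (i+1)) (P k) * lamM k)
            - ∑ k, triArea (P a) (P i) (P k) * lamM k) := by
      intro a
      have h1 : ∀ b : Fin n, (∑ k, triArea (P a) (P b) (P k) * (wfun i a * wfun i b * lamM k))
          = wfun i b * (wfun i a * ∑ k, triArea (P a) (P b) (P k) * lamM k) := by
        intro b; rw [Finset.mul_sum, Finset.mul_sum]
        exact Finset.sum_congr rfl fun k _ => by ring
      rw [Finset.sum_congr rfl fun b _ => h1 b,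
        sum_wfun_mul i (fun b => wfun i a * ∑ k, triArea (P a) (P b) (P k) * lamM k)]
      ring
    rw [Finset.sum_congr rfl fun a _ => inner a,
      sum_wfun_mul i (fun a => (∑ k, triArea (P a) (P (i+1)) (P k) * lamM k)
          - ∑ k, triArea (P a) (P i) (P k) * lamM k)]
    have e1 : (∑ k, triArea (P (i+1)) (P (i+1)) (P k) * lamM k) = 0 := by
      simp [triArea_self12]
    have e2 : (∑ k, triArea (P i) (P i) (P k) * lamM k) = 0 := by
      simp [triArea_self12]
    have e3 : (∑ k, triArea (P (i+1)) (P i) (P k) * lamM k)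
        = ∑ k, triArea (P i) (P (i+1)) (P k) * lamM k := by
      refine Finset.sum_congr rfl fun k _ => ?_
      rw [triArea_swap12]
    rw [e1, e2, e3]; ring
  have hS2b : (∑ a, ∑ b, ∑ k, triArea (P a) (P b) (P k) * (wfun i a * lamM b * wfun i k))
      = ∑ a, ∑ b, ∑ k, triArea (P a) (P b) (P k) * (wfun i a * wfun i b * lamM k) := by
    refine Finset.sum_congr rfl fun a _ => ?_
    rw [Finset.sum_comm]
    refine Finset.sum_congr rfl fun b _ => Finset.sum_congr rfl fun k _ => ?_
    rw [triArea_swap23]; ring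
  have hS2c : (∑ a, ∑ b, ∑ k, triArea (P a) (P b) (P k) * (lamM a * wfun i b * wfun i k))
      = ∑ a, ∑ b, ∑ k, triArea (P a) (P b) (P k) * (wfun i a * lamM b * wfun i k) := by
    rw [Finset.sum_comm]
    refine Finset.sum_congr rfl fun a _ => Finset.sum_congr rfl fun b _ =>
      Finset.sum_congr rfl fun k _ => ?_
    rw [triArea_swap12]; ring
  -- third-order sum
  have hS3 : (∑ a, ∑ b, ∑ k, triArea (P a) (P b) (P k) * (wfun i a * wfun i b * wfun i k)) = 0 := by
    have h1 : ∀ a b : Fin n, (∑ k, triArea (P a) (P b) (P k) * (wfun i a * wfun i b * wfun i k))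
        = wfun i a * (wfun i b * (triArea (P a) (P b) (P (i+1)) - triArea (P a) (P b) (P i))) := by
      intro a b
      have h0 : (∑ k, triArea (P a) (P b) (P k) * (wfun i a * wfun i b * wfun i k))
          = ∑ k, wfun i k * (wfun i a * wfun i b * triArea (P a) (P b) (P k)) :=
        Finset.sum_congr rfl fun k _ => by ring
      rw [h0, sum_wfun_mul i (fun k => wfun i a * wfun i b * triArea (P a) (P b) (P k))]
      ring
    have h2 : ∀ a : Fin n, (∑ b, ∑ k, triArea (P a) (P b) (P k) * (wfun i a * wfun i b * wfun i k))
        = wfun i a * ((triArea (P a) (P (i+1)) (P (i+1)) - triArea (P a) (P (i+1)) (P i))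
            - (triArea (P a) (P i) (P (i+1)) - triArea (P a) (P i) (P i))) := by
      intro a
      rw [Finset.sum_congr rfl fun b _ => h1 a b, ← Finset.mul_sum,
        sum_wfun_mul i (fun b => triArea (P a) (P b) (P (i+1)) - triArea (P a) (P b) (P i))]
    rw [Finset.sum_congr rfl fun a _ => h2 a,
      sum_wfun_mul i (fun a => (triArea (P a) (P (i+1)) (P (i+1)) - triArea (P a) (P (i+1)) (P i))
          - (triArea (P a) (P i) (P (i+1)) - triArea (P a) (P i) (P i)))]
    simp [triArea_self12, triArea_self13, triArea_self23]
  -- expansion of the cubic form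
  have hexp : (∑ a, ∑ b, ∑ k, triArea (P a) (P b) (P k) * (lamD a * lamD b * lamD k))
      = (∑ a, ∑ b, ∑ k, triArea (P a) (P b) (P k) * (lamM a * lamM b * lamM k))
      + lamM i * (∑ a, ∑ b, ∑ k, triArea (P a) (P b) (P k) * (wfun i a * lamM b * lamM k))
      + lamM i * (∑ a, ∑ b, ∑ k, triArea (P a) (P b) (P k) * (lamM a * wfun i b * lamM k))
      + lamM i * (∑ a, ∑ b, ∑ k, triArea (P a) (P b) (P k) * (lamM a * lamM b * wfun i k))
      + lamM i ^ 2 * (∑ a, ∑ b, ∑ k, triArea (P a) (P b) (P k) * (wfun i a * wfun i b * lamM k))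
      + lamM i ^ 2 * (∑ a, ∑ b, ∑ k, triArea (P a) (P b) (P k) * (wfun i a * lamM b * wfun i k))
      + lamM i ^ 2 * (∑ a, ∑ b, ∑ k, triArea (P a) (P b) (P k) * (lamM a * wfun i b * wfun i k))
      + lamM i ^ 3 * (∑ a, ∑ b, ∑ k, triArea (P a) (P b) (P k) * (wfun i a * wfun i b * wfun i k)) := by
    have step : (∑ a, ∑ b, ∑ k, triArea (P a) (P b) (P k) * (lamD a * lamD b * lamD k))
        = ∑ a, ∑ b, ∑ k,
          (triArea (P a) (P b) (P k) * (lamM a * lamM b * lamM k)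
          + lamM i * (triArea (P a) (P b) (P k) * (wfun i a * lamM b * lamM k))
          + lamM i * (triArea (P a) (P b) (P k) * (lamM a * wfun i b * lamM k))
          + lamM i * (triArea (P a) (P b) (P k) * (lamM a * lamM b * wfun i k))
          + lamM i ^ 2 * (triArea (P a) (P b) (P k) * (wfun i a * wfun i b * lamM k))
          + lamM i ^ 2 * (triArea (P a) (P b) (P k) * (wfun i a * lamM b * wfun i k))
          + lamM i ^ 2 * (triArea (P a) (P b) (P k) * (lamM a * wfun i b * wfun i k))
          + lamM i ^ 3 * (triArea (P a) (P b) (P k) * (wfun i a * wfun i b * wfun i k))) := by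
      refine Finset.sum_congr rfl fun a _ => Finset.sum_congr rfl fun b _ =>
        Finset.sum_congr rfl fun k _ => ?_
      rw [hx a, hx b, hx k]; ring
    rw [step]
    simp only [Finset.sum_add_distrib, ← Finset.mul_sum]
  -- put everything together
  have hSS : (∑ j, lamM j * triArea (P i) (P (i + 1)) (P j))
      = ∑ k, triArea (P i) (P (i+1)) (P k) * lamM k :=
    Finset.sum_congr rfl fun j _ => mul_comm _ _
  simp only [aForm]
  rw [hexp, hS1c, hS1b, hS1a, hS2c, hS2b, hS2a, hS3, hSS]
  ring
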